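/- For a finite Coxeter group G acting on ℝ^n, the number of chambers of the reflection arrangement (complement of the union of reflection hyperplanes) equals the order |G| of the group. -/

import Mathlib

open Matrix

/-- An element of `GL_n(ℝ)` is a reflection if it has order 2 and fixes a hyperplane
(a subspace of dimension `n − 1`) pointwise. -/
def IsReflection {n : ℕ} (σ : Matrix.GeneralLinearGroup (Fin n) ℝ) : Prop :=
  σ ≠ 1 ∧ σ * σ = 1 ∧
    Module.finrank ℝ
      (LinearMap.ker (Matrix.toLin' (σ : Matrix (Fin n) (Fin n) ℝ) - LinearMap.id)) = n - 1

namespace CC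

abbrev GLn (n : ℕ) := Matrix.GeneralLinearGroup (Fin n) ℝ
variable {n : ℕ}
def mv (σ : GLn n) (x : Fin n → ℝ) : Fin n → ℝ :=
  (σ : Matrix (Fin n) (Fin n) ℝ).mulVec x

lemma mv_mul (σ τ : GLn n) (x : Fin n → ℝ) : mv (σ * τ) x = mv σ (mv τ x) := by
  simp [mv, Matrix.mulVec_mulVec, Units.val_mul]

lemma mv_one (x : Fin n → ℝ) : mv (1 : GLn n) x = x := by
  simp [mv]

lemma mv_inv_mv (σ : GLn n) (x : Fin n → ℝ) : mv σ⁻¹ (mv σ x) = x := by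
  rw [← mv_mul, inv_mul_cancel, mv_one]

lemma mv_mv_inv (σ : GLn n) (x : Fin n → ℝ) : mv σ (mv σ⁻¹ x) = x := by
  rw [← mv_mul, mul_inv_cancel, mv_one]

lemma mv_add (σ : GLn n) (x y : Fin n → ℝ) : mv σ (x + y) = mv σ x + mv σ y := by
  simp [mv, Matrix.mulVec_add]

lemma mv_sub (σ : GLn n) (x y : Fin n → ℝ) : mv σ (x - y) = mv σ x - mv σ y := by
  simp [mv, Matrix.mulVec_sub]

lemma mv_smul (σ : GLn n) (c : ℝ) (x : Fin n → ℝ) : mv σ (c • x) = c • mv σ x := by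
  simp [mv, Matrix.mulVec_smul]

lemma mv_neg (σ : GLn n) (x : Fin n → ℝ) : mv σ (-x) = -mv σ x := by
  simp [mv, Matrix.mulVec_neg]

lemma mv_zero (σ : GLn n) : mv σ (0 : Fin n → ℝ) = 0 := by
  simp [mv]

lemma GL_ext {σ τ : GLn n} (h : ∀ x, mv σ x = mv τ x) : σ = τ := by
  apply Units.ext
  have : Matrix.toLin' (σ : Matrix (Fin n) (Fin n) ℝ) =
      Matrix.toLin' (τ : Matrix (Fin n) (Fin n) ℝ) := by
    apply LinearMap.ext
    intro x
    simpa [Matrix.toLin'_apply, mv] using h x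
  exact Matrix.toLin'.injective this

variable (G : Subgroup (GLn n)) [Fintype ↥G]

noncomputable def B (x y : Fin n → ℝ) : ℝ := ∑ g : ↥G, mv (g : GLn n) x ⬝ᵥ mv (g : GLn n) y

lemma B_symm (x y : Fin n → ℝ) : B G x y = B G y x := by
  unfold B; exact Finset.sum_congr rfl fun g _ => dotProduct_comm _ _

lemma B_add_right (x y z : Fin n → ℝ) : B G x (y + z) = B G x y + B G x z := by
  unfold B
  rw [← Finset.sum_add_distrib]
  exact Finset.sum_congr rfl fun g _ => by rw [mv_add, dotProduct_add]

lemma B_smul_right (c : ℝ) (x y : Fin n → ℝ) : B G x (c • y) = c * B G x y := by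
  unfold B
  rw [Finset.mul_sum]
  refine Finset.sum_congr rfl fun g _ => ?_
  rw [mv_smul]
  simp [dotProduct_smul, smul_eq_mul]

lemma B_add_left (x y z : Fin n → ℝ) : B G (x + y) z = B G x z + B G y z := by
  rw [B_symm, B_add_right, B_symm G z x, B_symm G z y]

lemma B_smul_left (c : ℝ) (x y : Fin n → ℝ) : B G (c • x) y = c * B G x y := by
  rw [B_symm, B_smul_right, B_symm G y x]

lemma B_zero_right (x : Fin n → ℝ) : B G x 0 = 0 := by
  have := B_smul_right G 0 x 0
  simpa using this

lemma B_sub_right (x y z : Fin n → ℝ) : B G x (y - z) = B G x y - B G x z := by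
  have := B_add_right G x (y - z) z
  simp at this
  linarith

lemma B_neg_right (x y : Fin n → ℝ) : B G x (-y) = -B G x y := by
  have := B_sub_right G x 0 y
  rw [B_zero_right] at this
  simpa using this

lemma B_neg_left (x y : Fin n → ℝ) : B G (-x) y = -B G x y := by
  rw [B_symm, B_neg_right, B_symm G y x]

/-- `B x ·` as a linear map. -/
noncomputable def BL (x : Fin n → ℝ) : (Fin n → ℝ) →ₗ[ℝ] ℝ where
  toFun y := B G x y
  map_add' := B_add_right G x
  map_smul' c y := B_smul_right G c x y

@[simp] lemma BL_apply (x y : Fin n → ℝ) : BL G x y = B G x y := rfl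

lemma B_self_pos {x : Fin n → ℝ} (hx : x ≠ 0) : 0 < B G x x := by
  unfold B
  have h1 : ∀ g ∈ (Finset.univ : Finset ↥G), (0:ℝ) ≤ mv (g : GLn n) x ⬝ᵥ mv (g : GLn n) x :=
    fun g _ => Finset.sum_nonneg fun i _ => mul_self_nonneg _
  refine Finset.sum_pos' h1 ⟨(1 : ↥G), Finset.mem_univ _, ?_⟩
  rw [OneMemClass.coe_one, mv_one]
  have hne : x ⬝ᵥ x ≠ 0 := fun h0 => hx (dotProduct_self_eq_zero.mp h0)
  have h2 : (0:ℝ) ≤ x ⬝ᵥ x := Finset.sum_nonneg fun i _ => mul_self_nonneg _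
  exact lt_of_le_of_ne h2 (Ne.symm hne)

lemma B_invariant {g : GLn n} (hg : g ∈ G) (x y : Fin n → ℝ) :
    B G (mv g x) (mv g y) = B G x y := by
  unfold B
  have key := Equiv.sum_comp (Equiv.mulRight (⟨g, hg⟩ : ↥G))
    (fun k : ↥G => mv (k : GLn n) x ⬝ᵥ mv (k : GLn n) y)
  rw [← key]
  refine Finset.sum_congr rfl fun h _ => ?_
  simp only [Equiv.coe_mulRight, Subgroup.coe_mul, mv_mul]

lemma B_inv_left {g : GLn n} (hg : g ∈ G) (x y : Fin n → ℝ) :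
    B G (mv g⁻¹ x) y = B G x (mv g y) := by
  conv_rhs => rw [← B_invariant G (inv_mem hg) x (mv g y), mv_inv_mv]

lemma B_mv_left {g : GLn n} (hg : g ∈ G) (x y : Fin n → ℝ) :
    B G (mv g x) y = B G x (mv g⁻¹ y) := by
  conv_rhs => rw [← B_invariant G hg x (mv g⁻¹ y), mv_mv_inv]


variable {n : ℕ} (G : Subgroup (GLn n)) [Fintype ↥G]

noncomputable section

/-- A root: a unit vector whose associated reflection lies in `G`. -/
def IsRoot (α : Fin n → ℝ) : Prop :=
  B G α α = 1 ∧ ∃ σ, σ ∈ G ∧ ∀ x, mv σ x = x - (2 * B G α x) • α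

open Classical in
/-- The reflection in `G` associated to a root. -/
def sGL (α : Fin n → ℝ) : GLn n :=
  if h : ∃ σ, σ ∈ G ∧ ∀ x, mv σ x = x - (2 * B G α x) • α then h.choose else 1

variable {G}

lemma B_mv_inv_right {g : GLn n} (hg : g ∈ G) (x y : Fin n → ℝ) :
    B G x (mv g⁻¹ y) = B G (mv g x) y := by
  conv_rhs => rw [← B_invariant G (inv_mem hg) (mv g x) y, mv_inv_mv]

lemma sGL_spec {α : Fin n → ℝ} (hα : IsRoot G α) :
    sGL G α ∈ G ∧ ∀ x, mv (sGL G α) x = x - (2 * B G α x) • α := by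
  rw [sGL, dif_pos hα.2]
  exact hα.2.choose_spec

lemma sGL_mem {α : Fin n → ℝ} (hα : IsRoot G α) : sGL G α ∈ G := (sGL_spec hα).1

lemma sGL_apply {α : Fin n → ℝ} (hα : IsRoot G α) (x : Fin n → ℝ) :
    mv (sGL G α) x = x - (2 * B G α x) • α := (sGL_spec hα).2 x

lemma sGL_unique {α : Fin n → ℝ} (hα : IsRoot G α) {σ : GLn n}
    (h : ∀ x, mv σ x = x - (2 * B G α x) • α) : σ = sGL G α :=
  GL_ext fun x => by rw [h x, sGL_apply hα]

lemma root_ne_zero {α : Fin n → ℝ} (hα : IsRoot G α) : α ≠ 0 := by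
  intro h
  have := hα.1
  rw [h, B_zero_right] at this
  norm_num at this

lemma sGL_root {α : Fin n → ℝ} (hα : IsRoot G α) : mv (sGL G α) α = -α := by
  rw [sGL_apply hα, hα.1]
  module

lemma sGL_sq {α : Fin n → ℝ} (hα : IsRoot G α) : sGL G α * sGL G α = 1 := by
  apply GL_ext
  intro x
  rw [mv_mul, mv_one, sGL_apply hα, sGL_apply hα]
  have h1 : B G α (x - (2 * B G α x) • α) = -B G α x := by
    rw [B_sub_right, B_smul_right, hα.1]; ring
  rw [h1]
  module

lemma sGL_inv {α : Fin n → ℝ} (hα : IsRoot G α) : (sGL G α)⁻¹ = sGL G α :=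
  inv_eq_of_mul_eq_one_right (sGL_sq hα)

lemma mem_refl_ker_iff (σ : GLn n) (x : Fin n → ℝ) :
    x ∈ LinearMap.ker (Matrix.toLin' (σ : Matrix (Fin n) (Fin n) ℝ) - LinearMap.id)
      ↔ mv σ x = x := by
  rw [LinearMap.mem_ker, LinearMap.sub_apply, Matrix.toLin'_apply, LinearMap.id_apply,
    sub_eq_zero]
  rfl

lemma finrank_V : Module.finrank ℝ (Fin n → ℝ) = n := by
  rw [Module.finrank_pi]; exact Fintype.card_fin n

lemma sGL_reflection {α : Fin n → ℝ} (hα : IsRoot G α) : IsReflection (sGL G α) := by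
  have hα0 := root_ne_zero hα
  refine ⟨?_, sGL_sq hα, ?_⟩
  · intro h
    have := sGL_root hα
    rw [h, mv_one] at this
    have h2 : (2:ℝ) • α = 0 := by
      have := congrArg (α + ·) this.symm
      simpa [two_smul] using this.symm
    rcases smul_eq_zero.mp h2 with h | h
    · norm_num at h
    · exact hα0 h
  · have hker : LinearMap.ker (Matrix.toLin' ((sGL G α : GLn n) : Matrix (Fin n) (Fin n) ℝ)
        - LinearMap.id) = LinearMap.ker (BL G α) := by
      ext x
      rw [mem_refl_ker_iff, LinearMap.mem_ker]
      constructor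
      · intro h
        rw [sGL_apply hα] at h
        have h2 : (2 * B G α x) • α = 0 := by
          have := congrArg (x - ·) h
          simpa using this
        rcases smul_eq_zero.mp h2 with h3 | h3
        · show B G α x = 0; linarith
        · exact absurd h3 hα0
      · intro h
        have h0 : B G α x = 0 := h
        rw [sGL_apply hα, h0]
        simp
    rw [hker]
    have hsurj : LinearMap.range (BL G α) = ⊤ := by
      rw [LinearMap.range_eq_top]
      intro r
      exact ⟨r • α, by simp [BL, B_smul_right, hα.1]⟩
    have := LinearMap.finrank_range_add_finrank_ker (BL G α)
    rw [hsurj, finrank_V] at this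
    simp [Module.finrank_self] at this
    omega

lemma isRoot_neg {α : Fin n → ℝ} (hα : IsRoot G α) : IsRoot G (-α) := by
  refine ⟨by rw [B_neg_left, B_neg_right, hα.1]; ring, sGL G α, sGL_mem hα, fun x => ?_⟩
  rw [sGL_apply hα, B_neg_left]
  module

lemma sGL_neg {α : Fin n → ℝ} (hα : IsRoot G α) : sGL G (-α) = sGL G α := by
  refine (sGL_unique (isRoot_neg hα) fun x => ?_).symm
  rw [sGL_apply hα, B_neg_left]
  module

/-- Every reflection in `G` comes from a root. -/
lemma reflection_has_root {σ : GLn n} (hσG : σ ∈ G) (hσ : IsReflection σ) :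
    ∃ α, IsRoot G α ∧ σ = sGL G α := by
  obtain ⟨hne, hsq, hrank⟩ := hσ
  -- a (-1)-eigenvector
  have hx1 : ∃ x₁, mv σ x₁ ≠ x₁ := by
    by_contra h
    push_neg at h
    exact hne (GL_ext fun x => by rw [h x, mv_one])
  obtain ⟨x₁, hx1⟩ := hx1
  set a := x₁ - mv σ x₁ with ha
  have ha0 : a ≠ 0 := sub_ne_zero.mpr (Ne.symm hx1)
  have haσ : mv σ a = -a := by
    rw [ha, mv_sub, ← mv_mul, hsq, mv_one]
    abel
  set η := Real.sqrt (B G a a) with hη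
  have hBa : 0 < B G a a := B_self_pos G ha0
  have hη0 : 0 < η := Real.sqrt_pos.mpr hBa
  set α := η⁻¹ • a with hαdef
  have hαa : B G α α = 1 := by
    have hss : η * η = B G a a := Real.mul_self_sqrt hBa.le
    rw [hαdef, B_smul_left, B_smul_right, ← mul_assoc, ← mul_inv, hss]
    exact inv_mul_cancel₀ hBa.ne'
  have hα0 : α ≠ 0 := by
    intro h
    rw [h, B_zero_right] at hαa
    norm_num at hαa
  have hασ : mv σ α = -α := by rw [hαdef, mv_smul, haσ, smul_neg]
  -- orthogonality of the fixed space
  set K := LinearMap.ker (Matrix.toLin' (σ : Matrix (Fin n) (Fin n) ℝ) - LinearMap.id) with hK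
  have horth : ∀ k ∈ K, B G α k = 0 := by
    intro k hk
    rw [mem_refl_ker_iff] at hk
    have := B_invariant G hσG α k
    rw [hασ, hk, B_neg_left] at this
    linarith
  have hαK : α ∉ K := by
    rw [mem_refl_ker_iff, hασ]
    intro h
    apply hα0
    have h2 : (2:ℝ) • α = 0 := by
      have := congrArg (α + ·) h
      simpa [two_smul] using this.symm
    rcases smul_eq_zero.mp h2 with h3 | h3
    · norm_num at h3
    · exact h3
  -- K ⊔ span α = ⊤
  have hfr : Module.finrank ℝ (Fin n → ℝ) = n := finrank_V
  have hn1 : 1 ≤ n := by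
    have : Nontrivial (Fin n → ℝ) := ⟨α, 0, hα0⟩
    have := Module.finrank_pos (R := ℝ) (M := Fin n → ℝ)
    omega
  have hinf : K ⊓ (ℝ ∙ α) = ⊥ := by
    rw [Submodule.eq_bot_iff]
    intro x ⟨hxK, hxS⟩
    obtain ⟨c, rfl⟩ := Submodule.mem_span_singleton.mp hxS
    have := horth _ hxK
    rw [B_smul_right, hαa, mul_one] at this
    rw [this, zero_smul]
  have hsup : K ⊔ (ℝ ∙ α) = ⊤ := by
    apply Submodule.eq_top_of_finrank_eq
    have h1 := Submodule.finrank_sup_add_finrank_inf_eq K (ℝ ∙ α)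
    rw [hinf, hrank, finrank_span_singleton hα0] at h1
    simp only [finrank_bot, add_zero] at h1
    rw [hfr]
    omega
  have hform : ∀ x, mv σ x = x - (2 * B G α x) • α := by
    intro x
    have hx : x ∈ K ⊔ (ℝ ∙ α) := by rw [hsup]; trivial
    obtain ⟨k, hk, s, hs, rfl⟩ := Submodule.mem_sup.mp hx
    obtain ⟨c, rfl⟩ := Submodule.mem_span_singleton.mp hs
    have hkfix : mv σ k = k := (mem_refl_ker_iff σ k).mp hk
    have hBx : B G α (k + c • α) = c := by
      rw [B_add_right, B_smul_right, horth _ hk, hαa]; ring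
    rw [mv_add, hkfix, mv_smul, hασ, hBx]
    module
  have hroot : IsRoot G α := ⟨hαa, σ, hσG, hform⟩
  exact ⟨α, hroot, sGL_unique hroot hform⟩

/-- `G` maps roots to roots. -/
lemma isRoot_mv {g : GLn n} (hg : g ∈ G) {α : Fin n → ℝ} (hα : IsRoot G α) :
    IsRoot G (mv g α) := by
  refine ⟨by rw [B_invariant G hg, hα.1], g * sGL G α * g⁻¹,
    mul_mem (mul_mem hg (sGL_mem hα)) (inv_mem hg), fun x => ?_⟩
  rw [mv_mul, mv_mul, sGL_apply hα, mv_sub, mv_mv_inv, mv_smul, B_mv_inv_right hg]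

/-- Conjugation formula: `s_{gα} = g s_α g⁻¹`. -/
lemma sGL_conj {g : GLn n} (hg : g ∈ G) {α : Fin n → ℝ} (hα : IsRoot G α) :
    sGL G (mv g α) = g * sGL G α * g⁻¹ := by
  refine (sGL_unique (isRoot_mv hg hα) fun x => ?_).symm
  rw [mv_mul, mv_mul, sGL_apply hα, mv_sub, mv_mv_inv, mv_smul, B_mv_inv_right hg]

lemma B_sub_left (x y z : Fin n → ℝ) : B G (x - y) z = B G x z - B G y z := by
  rw [B_symm, B_sub_right, B_symm G z x, B_symm G z y]

/-- The set of roots is finite. -/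
lemma finite_roots : Set.Finite {α : Fin n → ℝ | IsRoot G α} := by
  classical
  have hsub : {α : Fin n → ℝ | IsRoot G α} ⊆
      ⋃ g ∈ (G : Set (GLn n)), {α | B G α α = 1 ∧ ∀ x, mv g x = x - (2 * B G α x) • α} := by
    intro α hα
    obtain ⟨h1, σ, hσG, hf⟩ := hα
    exact Set.mem_biUnion hσG ⟨h1, hf⟩
  refine Set.Finite.subset (Set.Finite.biUnion (Set.toFinite _) fun g _ => ?_) hsub
  set A := {α : Fin n → ℝ | B G α α = 1 ∧ ∀ x, mv g x = x - (2 * B G α x) • α} with hA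
  rcases Set.eq_empty_or_nonempty A with h | ⟨β, hβ⟩
  · rw [h]; exact Set.finite_empty
  · have : A ⊆ {β, -β} := by
      intro α hα
      have hββ := hβ.1
      have hαα := hα.1
      have he : ∀ x, x - (2 * B G β x) • β = x - (2 * B G α x) • α :=
        fun x => (hβ.2 x).symm.trans (hα.2 x)
      have he2 : (2 * B G β α) • β = (2 * B G α α) • α := by
        have := he α
        have h3 := congrArg (fun z => α - z) this
        simpa using h3
      rw [hαα, mul_one] at he2
      have hα2 : α = (B G β α) • β := by
        have h4 : (2:ℝ) • α = (2 * B G β α) • β := he2.symm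
        have := congrArg (fun z => (2:ℝ)⁻¹ • z) h4
        simpa [smul_smul, ← mul_assoc] using this
      have hc2 : (B G β α) * (B G β α) = 1 := by
        have := hαα
        rw [hα2, B_smul_left, B_smul_right, hββ, mul_one] at this
        exact this
      have : B G β α = 1 ∨ B G β α = -1 := by
        rcases mul_self_eq_one_iff.mp hc2 with h | h
        · exact Or.inl h
        · exact Or.inr h
      rcases this with h | h
      · left; rw [hα2, h, one_smul]
      · right; rw [hα2, h]; module
    exact Set.Finite.subset ((Set.finite_singleton (-β)).insert β) this

/-- The chamber complement, described via roots. -/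
def Xr (G' : Subgroup (GLn n)) [Fintype ↥G'] : Set (Fin n → ℝ) :=
  {x | ∀ α, IsRoot G' α → B G' α x ≠ 0}

/-- The root description of the chamber complement. -/
lemma Xset_eq :
    {x : Fin n → ℝ | ∀ σ ∈ G, IsReflection σ →
        (σ : Matrix (Fin n) (Fin n) ℝ).mulVec x ≠ x} = Xr G := by
  ext x
  constructor
  · intro hx α hα hB
    refine hx (sGL G α) (sGL_mem hα) (sGL_reflection hα) ?_
    show mv (sGL G α) x = x
    rw [sGL_apply hα, hB]
    simp
  · intro hx σ hσG hσ hfix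
    obtain ⟨α, hα, rfl⟩ := reflection_has_root hσG hσ
    have : mv (sGL G α) x = x := hfix
    rw [sGL_apply hα] at this
    have h2 : (2 * B G α x) • α = 0 := by
      have := congrArg (fun z => x - z) this
      simpa using this
    rcases smul_eq_zero.mp h2 with h3 | h3
    · exact hx α hα (by linarith)
    · exact root_ne_zero hα h3

/-- A point avoiding all root hyperplanes exists. -/
lemma exists_x0 : ∃ x₀, x₀ ∈ Xr G := by
  classical
  have hnull : MeasureTheory.volume (⋃ α ∈ {α : Fin n → ℝ | IsRoot G α},
      (LinearMap.ker (BL G α) : Set (Fin n → ℝ))) = 0 := by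
    refine (MeasureTheory.measure_biUnion_null_iff (finite_roots (G := G)).countable).mpr ?_
    intro α hα
    refine MeasureTheory.Measure.addHaar_submodule _ _ ?_
    intro htop
    have : α ∈ LinearMap.ker (BL G α) := htop ▸ Submodule.mem_top
    have h1 : B G α α = 0 := this
    rw [hα.1] at h1
    norm_num at h1
  have hne : (⋃ α ∈ {α : Fin n → ℝ | IsRoot G α},
      (LinearMap.ker (BL G α) : Set (Fin n → ℝ))) ≠ Set.univ := by
    intro h
    rw [h] at hnull
    have hpos : 0 < MeasureTheory.volume (Set.univ : Set (Fin n → ℝ)) :=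
      isOpen_univ.measure_pos _ ⟨0, trivial⟩
    rw [hnull] at hpos
    exact lt_irrefl _ hpos
  have : ∃ x₀, x₀ ∉ (⋃ α ∈ {α : Fin n → ℝ | IsRoot G α},
      (LinearMap.ker (BL G α) : Set (Fin n → ℝ))) := by
    by_contra h
    push_neg at h
    exact hne (Set.eq_univ_of_forall h)
  obtain ⟨x₀, hx₀⟩ := this
  refine ⟨x₀, fun α hα hB => hx₀ (Set.mem_biUnion hα ?_)⟩
  exact hB

/-- Membership of the chamber complement is stable under `G`. -/
lemma X_stable {g : GLn n} (hg : g ∈ G) {x : Fin n → ℝ} (hx : x ∈ Xr G) :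
    mv g x ∈ Xr G := by
  intro α hα hB
  rw [← B_inv_left G hg] at hB
  exact hx _ (isRoot_mv (inv_mem hg) hα) hB

lemma convex_pos {a b t : ℝ} (ht0 : 0 ≤ t) (ht1 : t ≤ 1) (ha : 0 < a) (hb : 0 < b) :
    0 < (1 - t) * a + t * b := by
  nlinarith [mul_nonneg (sub_nonneg.mpr ht1) ha.le, mul_nonneg ht0 hb.le, mul_pos ha hb]

/-- Same strict sign on every root hyperplane implies same connected component. -/
lemma mk_eq_of_sign (x y : ↥(Xr G))
    (h : ∀ α, IsRoot G α → 0 < B G α x.val * B G α y.val) :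
    ConnectedComponents.mk x = ConnectedComponents.mk y := by
  have hmem : ∀ t : unitInterval, x.val + (t : ℝ) • (y.val - x.val) ∈ Xr G := by
    intro t α hα
    have hval : B G α (x.val + (t : ℝ) • (y.val - x.val))
        = (1 - (t : ℝ)) * B G α x.val + (t : ℝ) * B G α y.val := by
      rw [B_add_right, B_smul_right, B_sub_right]; ring
    rw [hval]
    rcases mul_pos_iff.mp (h α hα) with ⟨h1, h2⟩ | ⟨h1, h2⟩
    · exact ne_of_gt (convex_pos t.2.1 t.2.2 h1 h2)
    · have hcp := convex_pos t.2.1 t.2.2 (neg_pos.mpr h1) (neg_pos.mpr h2)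
      refine ne_of_lt ?_
      nlinarith [hcp]
  have hcont : Continuous fun t : unitInterval =>
      (⟨x.val + (t : ℝ) • (y.val - x.val), hmem t⟩ : ↥(Xr G)) := by
    refine Continuous.subtype_mk ?_ _
    exact continuous_const.add (continuous_subtype_val.smul continuous_const)
  have hjoined : Joined x y := by
    refine ⟨⟨⟨_, hcont⟩, ?_, ?_⟩⟩
    · apply Subtype.ext; simp
    · apply Subtype.ext; simp
  exact ConnectedComponents.coe_eq_coe'.mpr
    (pathComponent_subset_component _ hjoined.symm)

/-- Same connected component implies same strict sign on every root hyperplane. -/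
lemma sign_of_mk_eq (x y : ↥(Xr G))
    (h : ConnectedComponents.mk x = ConnectedComponents.mk y) :
    ∀ α, IsRoot G α → 0 < B G α x.val * B G α y.val := by
  intro α hα
  have hx := x.2 α hα
  have hy := y.2 α hα
  by_contra hle
  push_neg at hle
  have hlt : B G α x.val * B G α y.val < 0 :=
    lt_of_le_of_ne hle (mul_ne_zero hx hy)
  set f : ↥(Xr G) → ℝ := fun p => B G α p.val with hf
  have hfc : Continuous f :=
    ((BL G α).continuous_of_finiteDimensional).comp continuous_subtype_val
  have hxy : x ∈ connectedComponent y := ConnectedComponents.coe_eq_coe'.mp h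
  have hpre : IsPreconnected (f '' connectedComponent y) :=
    isPreconnected_connectedComponent.image f hfc.continuousOn
  have hx' : f x ∈ f '' connectedComponent y := Set.mem_image_of_mem f hxy
  have hy' : f y ∈ f '' connectedComponent y :=
    Set.mem_image_of_mem f mem_connectedComponent
  have h0 : (0:ℝ) ∈ f '' connectedComponent y := by
    rcases mul_neg_iff.mp hlt with ⟨h1, h2⟩ | ⟨h1, h2⟩
    · exact hpre.Icc_subset hy' hx' ⟨h2.le, h1.le⟩
    · exact hpre.Icc_subset hx' hy' ⟨h1.le, h2.le⟩
  obtain ⟨p, hp, hp0⟩ := h0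
  exact p.2 α hα hp0

/-- Transitivity: some element of `G` brings `x₀` into the chamber of `y`. -/
lemma exists_g_sign {x₀ y : Fin n → ℝ} (hx₀ : x₀ ∈ Xr G) (hy : y ∈ Xr G) :
    ∃ g ∈ G, ∀ α, IsRoot G α → 0 < B G α (mv g x₀) * B G α y := by
  classical
  obtain ⟨g₀, -, hmax⟩ := Finset.exists_max_image (Finset.univ : Finset ↥G)
    (fun g : ↥G => B G (mv (g : GLn n) x₀) y) ⟨1, Finset.mem_univ _⟩
  refine ⟨g₀, g₀.2, fun α hα => ?_⟩
  by_contra hle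
  push_neg at hle
  have hgx : mv (g₀ : GLn n) x₀ ∈ Xr G := X_stable g₀.2 hx₀
  have hlt : B G α (mv (g₀ : GLn n) x₀) * B G α y < 0 :=
    lt_of_le_of_ne hle (mul_ne_zero (hgx α hα) (hy α hα))
  set g₁ : GLn n := sGL G α * (g₀ : GLn n) with hg₁
  have hg₁G : g₁ ∈ G := mul_mem (sGL_mem hα) g₀.2
  have hval : B G (mv g₁ x₀) y
      = B G (mv (g₀ : GLn n) x₀) y - 2 * B G α (mv (g₀ : GLn n) x₀) * B G α y := by
    rw [hg₁, mv_mul, sGL_apply hα, B_sub_left, B_smul_left, B_symm G α]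
    try ring
  have := hmax ⟨g₁, hg₁G⟩ (Finset.mem_univ _)
  rw [hval] at this  -- uses that coe of ⟨g₁,_⟩ is g₁
  nlinarith

/-! ### Positive roots and simple systems -/

/-- Positive roots relative to a base point. -/
def Pos (G' : Subgroup (GLn n)) [Fintype ↥G'] (x₀ : Fin n → ℝ) : Set (Fin n → ℝ) :=
  {α | IsRoot G' α ∧ 0 < B G' α x₀}

/-- Nonnegative cone generated by a finite set. -/
def inCone (E : Finset (Fin n → ℝ)) (β : Fin n → ℝ) : Prop :=
  ∃ c : (Fin n → ℝ) → ℝ, (∀ δ, 0 ≤ c δ) ∧ β = ∑ δ ∈ E, c δ • δ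

lemma B_sum_right (x : Fin n → ℝ) (E : Finset (Fin n → ℝ)) (c : (Fin n → ℝ) → ℝ) :
    B G x (∑ δ ∈ E, c δ • δ) = ∑ δ ∈ E, c δ * B G x δ := by
  have h := map_sum (BL G x) (fun δ => c δ • δ) E
  simp only [BL_apply] at h
  rw [h]
  exact Finset.sum_congr rfl fun δ _ => B_smul_right G _ _ _

lemma B_sum_left (x : Fin n → ℝ) (E : Finset (Fin n → ℝ)) (c : (Fin n → ℝ) → ℝ) :
    B G (∑ δ ∈ E, c δ • δ) x = ∑ δ ∈ E, c δ * B G δ x := by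
  rw [B_symm, B_sum_right]
  exact Finset.sum_congr rfl fun δ _ => by rw [B_symm]

lemma sum_add_smul (E : Finset (Fin n → ℝ)) (f g : (Fin n → ℝ) → ℝ) :
    ∑ δ ∈ E, (f δ + g δ) • δ = (∑ δ ∈ E, f δ • δ) + ∑ δ ∈ E, g δ • δ := by
  rw [← Finset.sum_add_distrib]
  exact Finset.sum_congr rfl fun δ _ => add_smul _ _ _

lemma sum_sub_smul (E : Finset (Fin n → ℝ)) (f g : (Fin n → ℝ) → ℝ) :
    ∑ δ ∈ E, (f δ - g δ) • δ = (∑ δ ∈ E, f δ • δ) - ∑ δ ∈ E, g δ • δ := by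
  rw [← Finset.sum_sub_distrib]
  exact Finset.sum_congr rfl fun δ _ => sub_smul _ _ _

lemma sum_ite_smul [DecidableEq (Fin n → ℝ)] (E : Finset (Fin n → ℝ)) {δ₀ : Fin n → ℝ}
    (h : δ₀ ∈ E) (r : ℝ) :
    ∑ δ ∈ E, (if δ = δ₀ then r else 0) • δ = r • δ₀ := by
  rw [Finset.sum_eq_single δ₀]
  · simp
  · intro b _ hb
    simp [hb]
  · intro hδ
    exact absurd h hδ

/-- A nonnegative nontrivial combination of positive roots is nonzero. -/
lemma pos_comb_ne_zero {x₀ : Fin n → ℝ} {E : Finset (Fin n → ℝ)}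
    (hE : ↑E ⊆ Pos G x₀) {k : (Fin n → ℝ) → ℝ} (hk : ∀ δ ∈ E, 0 ≤ k δ)
    {δ₁ : Fin n → ℝ} (hδ₁ : δ₁ ∈ E) (hk1 : 0 < k δ₁) :
    ∑ δ ∈ E, k δ • δ ≠ 0 := by
  intro h0
  have h1 : B G x₀ (∑ δ ∈ E, k δ • δ) = 0 := by rw [h0, B_zero_right]
  rw [B_sum_right] at h1
  have hpos : 0 < ∑ δ ∈ E, k δ * B G x₀ δ := by
    refine Finset.sum_pos' (fun δ hδ => mul_nonneg (hk δ hδ) ?_) ⟨δ₁, hδ₁, ?_⟩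
    · rw [B_symm]; exact (hE hδ).2.le
    · refine mul_pos hk1 ?_
      rw [B_symm]; exact (hE hδ₁).2
  rw [h1] at hpos
  exact lt_irrefl _ hpos

/-- Substitution: if an element of `E` is in the cone of the rest, it can be erased. -/
lemma cone_subst [DecidableEq (Fin n → ℝ)] {E : Finset (Fin n → ℝ)} {δ₀ : Fin n → ℝ}
    (hδ₀ : δ₀ ∈ E) (h : inCone (E.erase δ₀) δ₀) {β : Fin n → ℝ} (hβ : inCone E β) :
    inCone (E.erase δ₀) β := by
  obtain ⟨d, hd, hdsum⟩ := h
  obtain ⟨c, hc, hcsum⟩ := hβ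
  refine ⟨fun δ => c δ + c δ₀ * d δ,
    fun δ => add_nonneg (hc δ) (mul_nonneg (hc δ₀) (hd δ)), ?_⟩
  have h3 : ∀ r : ℝ, r • δ₀ = ∑ δ ∈ E.erase δ₀, (r * d δ) • δ := by
    intro r
    conv_lhs => rw [hdsum]
    rw [Finset.smul_sum]
    exact Finset.sum_congr rfl fun δ _ => smul_smul _ _ _
  rw [sum_add_smul, ← h3 (c δ₀), hcsum, ← Finset.sum_erase_add E _ hδ₀]

/-- Existence of a minimal positive generating set (simple system precursor). -/
lemma exists_simple_system (x₀ : Fin n → ℝ) :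
    ∃ Δ : Finset (Fin n → ℝ), ↑Δ ⊆ Pos G x₀ ∧ (∀ β ∈ Pos G x₀, inCone Δ β) ∧
      ∀ Δ' : Finset (Fin n → ℝ), ↑Δ' ⊆ Pos G x₀ → (∀ β ∈ Pos G x₀, inCone Δ' β) →
        Δ.card ≤ Δ'.card := by
  classical
  have hfin : (Pos G x₀).Finite := (finite_roots (G := G)).subset fun α hα => hα.1
  set Pf := hfin.toFinset with hPf
  have hbase : ↑Pf ⊆ Pos G x₀ ∧ ∀ β ∈ Pos G x₀, inCone Pf β := by
    constructor
    · intro α hα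
      have : α ∈ hfin.toFinset := hα
      rwa [Set.Finite.mem_toFinset] at this
    · intro β hβ
      refine ⟨fun δ => if δ = β then 1 else 0,
        fun δ => by by_cases h : δ = β <;> simp [h], ?_⟩
      rw [sum_ite_smul _ (hfin.mem_toFinset.mpr hβ), one_smul]
  set P : ℕ → Prop := fun kk => ∃ E : Finset (Fin n → ℝ),
    (↑E ⊆ Pos G x₀ ∧ ∀ β ∈ Pos G x₀, inCone E β) ∧ E.card = kk with hP
  have hPex : ∃ kk, P kk := ⟨Pf.card, Pf, hbase, rfl⟩
  obtain ⟨E, hE, hcard⟩ := Nat.find_spec hPex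
  refine ⟨E, hE.1, hE.2, fun Δ' h1 h2 => ?_⟩
  rw [hcard]
  exact Nat.find_le ⟨Δ', ⟨h1, h2⟩, rfl⟩

/-- In a minimal system, distinct elements have nonpositive inner products. -/
lemma pairwise_nonpos {x₀ : Fin n → ℝ} (hx₀ : x₀ ∈ Xr G) {Δ : Finset (Fin n → ℝ)}
    (hsub : ↑Δ ⊆ Pos G x₀) (hcone : ∀ β ∈ Pos G x₀, inCone Δ β)
    (hmin : ∀ Δ' : Finset (Fin n → ℝ), ↑Δ' ⊆ Pos G x₀ →
      (∀ β ∈ Pos G x₀, inCone Δ' β) → Δ.card ≤ Δ'.card)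
    {α β : Fin n → ℝ} (hα : α ∈ Δ) (hβ : β ∈ Δ) (hne : α ≠ β) :
    B G α β ≤ 0 := by
  classical
  by_contra hposB
  push_neg at hposB
  have hαr : IsRoot G α := (hsub hα).1
  have hβr : IsRoot G β := (hsub hβ).1
  set c : ℝ := 2 * B G α β with hc
  have hc0 : 0 < c := by positivity
  set γ : Fin n → ℝ := mv (sGL G α) β with hγ
  have hγr : IsRoot G γ := by rw [hγ]; exact isRoot_mv (sGL_mem hαr) hβr
  have hγval : γ = β - c • α := by rw [hγ, sGL_apply hαr]
  have hγx₀ : B G γ x₀ ≠ 0 := hx₀ γ hγr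
  -- auxiliary: erasing is a contradiction with minimality
  have herase : ∀ δ₀ ∈ Δ, ¬ inCone (Δ.erase δ₀) δ₀ := by
    intro δ₀ hδ₀ hcone'
    have h1 : ∀ β' ∈ Pos G x₀, inCone (Δ.erase δ₀) β' :=
      fun β' hβ' => cone_subst hδ₀ hcone' (hcone β' hβ')
    have h2 := hmin (Δ.erase δ₀) (fun z hz => hsub (Finset.mem_of_mem_erase hz)) h1
    rw [Finset.card_erase_of_mem hδ₀] at h2
    have := Finset.card_pos.mpr ⟨δ₀, hδ₀⟩
    omega
  rcases lt_or_gt_of_ne hγx₀ with hneg | hpos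
  · -- `-γ` is a positive root : `c•α = Σ m δ + β`
    have hmγ : -γ ∈ Pos G x₀ := ⟨isRoot_neg hγr, by rw [B_neg_left]; linarith⟩
    obtain ⟨m, hm, hmsum⟩ := hcone _ hmγ
    have key : c • α = (∑ δ ∈ Δ, m δ • δ) + β := by
      rw [← hmsum, hγval]; module
    have hs : ∑ δ ∈ Δ, m δ • δ = (∑ δ ∈ Δ.erase α, m δ • δ) + m α • α :=
      (Finset.sum_erase_add Δ _ hα).symm
    rw [hs] at key
    set t := ∑ δ ∈ Δ.erase α, m δ • δ with ht
    by_cases hmα : m α < c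
    · apply herase α hα
      have key2 : (c - m α) • α = ∑ δ ∈ Δ.erase α, (m δ + if δ = β then 1 else 0) • δ := by
        rw [sum_add_smul, sum_ite_smul _ (Finset.mem_erase.mpr ⟨hne.symm, hβ⟩), one_smul, ← ht]
        linear_combination (norm := module) key
      refine ⟨fun δ => (c - m α)⁻¹ * (m δ + if δ = β then 1 else 0), ?_, ?_⟩
      · intro δ
        have h1 : (0:ℝ) ≤ m δ + if δ = β then 1 else 0 := by
          have := hm δ; split <;> linarith
        have h2 : (0:ℝ) ≤ (c - m α)⁻¹ := by
          apply inv_nonneg.mpr; linarith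
        exact mul_nonneg h2 h1
      · have h4 : ∑ δ ∈ Δ.erase α, ((c - m α)⁻¹ * (m δ + if δ = β then 1 else 0)) • δ
            = (c - m α)⁻¹ • ((c - m α) • α) := by
          rw [key2, Finset.smul_sum]
          exact Finset.sum_congr rfl fun δ _ => (smul_smul _ _ _).symm
        rw [h4, smul_smul, inv_mul_cancel₀ (by linarith), one_smul]
    · push_neg at hmα
      have key3 : ∑ δ ∈ Δ, ((m δ + if δ = β then 1 else 0) - if δ = α then c else 0) • δ
          = 0 := by
        rw [sum_sub_smul, sum_add_smul, sum_ite_smul _ hβ, sum_ite_smul _ hα, one_smul, hs]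
        linear_combination (norm := module) -key
      refine pos_comb_ne_zero hsub (k := fun δ =>
        (m δ + if δ = β then 1 else 0) - if δ = α then c else 0) ?_ hβ ?_ key3
      · intro δ hδ
        have hmδ := hm δ
        have h3 := hm α
        have h4 := hm β
        by_cases h1 : δ = α <;> by_cases h2 : δ = β
        · exact absurd (h1.symm.trans h2) hne
        · simp only [h1, h2, hne, Ne.symm hne, if_true, if_false]; linarith
        · simp only [h1, h2, hne, Ne.symm hne, if_true, if_false]; linarith
        · simp only [h1, h2, if_false]; linarith
      · have hβα : ¬ (β = α) := fun h => hne h.symm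
        have := hm β
        simp [hβα]
        linarith
  · -- `γ` is a positive root : `β = Σ m δ + c•α`
    have hγP : γ ∈ Pos G x₀ := ⟨hγr, hpos⟩
    obtain ⟨m, hm, hmsum⟩ := hcone _ hγP
    have key : β = (∑ δ ∈ Δ, m δ • δ) + c • α := by
      rw [← hmsum, hγval]; module
    have hs : ∑ δ ∈ Δ, m δ • δ = (∑ δ ∈ Δ.erase β, m δ • δ) + m β • β :=
      (Finset.sum_erase_add Δ _ hβ).symm
    rw [hs] at key
    set t := ∑ δ ∈ Δ.erase β, m δ • δ with ht
    by_cases hmβ : m β < 1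
    · apply herase β hβ
      have key2 : (1 - m β) • β = ∑ δ ∈ Δ.erase β, (m δ + if δ = α then c else 0) • δ := by
        rw [sum_add_smul, sum_ite_smul _ (Finset.mem_erase.mpr ⟨hne, hα⟩), ← ht]
        linear_combination (norm := module) key
      refine ⟨fun δ => (1 - m β)⁻¹ * (m δ + if δ = α then c else 0), ?_, ?_⟩
      · intro δ
        have h1 : (0:ℝ) ≤ m δ + if δ = α then c else 0 := by
          have := hm δ; split <;> linarith
        have h2 : (0:ℝ) ≤ (1 - m β)⁻¹ := by
          apply inv_nonneg.mpr; linarith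
        exact mul_nonneg h2 h1
      · have h4 : ∑ δ ∈ Δ.erase β, ((1 - m β)⁻¹ * (m δ + if δ = α then c else 0)) • δ
            = (1 - m β)⁻¹ • ((1 - m β) • β) := by
          rw [key2, Finset.smul_sum]
          exact Finset.sum_congr rfl fun δ _ => (smul_smul _ _ _).symm
        rw [h4, smul_smul, inv_mul_cancel₀ (by linarith), one_smul]
    · push_neg at hmβ
      have key3 : ∑ δ ∈ Δ, ((m δ + if δ = α then c else 0) - if δ = β then 1 else 0) • δ
          = 0 := by
        rw [sum_sub_smul, sum_add_smul, sum_ite_smul _ hα, sum_ite_smul _ hβ, one_smul, hs]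
        linear_combination (norm := module) -key
      refine pos_comb_ne_zero hsub (k := fun δ =>
        (m δ + if δ = α then c else 0) - if δ = β then 1 else 0) ?_ hα ?_ key3
      · intro δ hδ
        have hmδ := hm δ
        have h3 := hm α
        have h4 := hm β
        by_cases h1 : δ = α <;> by_cases h2 : δ = β
        · exact absurd (h1.symm.trans h2) hne
        · simp only [h1, h2, hne, Ne.symm hne, if_true, if_false]; linarith
        · simp only [h1, h2, hne, Ne.symm hne, if_true, if_false]; linarith
        · simp only [h1, h2, if_false]; linarith
      · have hαβ : ¬ (α = β) := hne
        have := hm α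
        simp [hαβ]
        linarith

/-! ### Coordinates, simple reflections, exchange -/

lemma no_pos_part {x₀ : Fin n → ℝ} (hx₀ : x₀ ∈ Xr G) {Δ : Finset (Fin n → ℝ)}
    (hsub : ↑Δ ⊆ Pos G x₀)
    (hpair : ∀ α ∈ Δ, ∀ β ∈ Δ, α ≠ β → B G α β ≤ 0)
    {a : (Fin n → ℝ) → ℝ} (ha : ∑ δ ∈ Δ, a δ • δ = 0) :
    ∀ δ ∈ Δ, a δ ≤ 0 := by
  classical
  set P := Δ.filter (fun δ => 0 < a δ) with hP
  set N := Δ.filter (fun δ => ¬ 0 < a δ) with hN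
  set u := ∑ δ ∈ P, a δ • δ with hu
  have hsplit := Finset.sum_filter_add_sum_filter_not Δ (fun δ => 0 < a δ)
    (fun δ => a δ • δ)
  rw [ha] at hsplit
  have hu2 : u = ∑ δ ∈ N, (-a δ) • δ := by
    have : ∑ δ ∈ N, (-a δ) • δ = -∑ δ ∈ N, a δ • δ := by
      rw [← Finset.sum_neg_distrib]
      exact Finset.sum_congr rfl fun δ _ => neg_smul _ _
    rw [this]
    exact eq_neg_of_add_eq_zero_left hsplit
  have hBuu : B G u u ≤ 0 := by
    have h1 : B G u u = ∑ p ∈ P, a p * B G p u := B_sum_left u P a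
    rw [h1]
    refine Finset.sum_nonpos fun p hp => ?_
    have hap : 0 < a p := (Finset.mem_filter.mp hp).2
    have hpΔ : p ∈ Δ := (Finset.mem_filter.mp hp).1
    have h2 : B G p u = ∑ δ ∈ N, (-a δ) * B G p δ := by
      rw [hu2]; exact B_sum_right p N _
    have h3 : B G p u ≤ 0 := by
      rw [h2]
      refine Finset.sum_nonpos fun δ hδ => ?_
      have hδΔ : δ ∈ Δ := (Finset.mem_filter.mp hδ).1
      have hδa : ¬ 0 < a δ := (Finset.mem_filter.mp hδ).2
      have hne : p ≠ δ := fun h => hδa (h ▸ hap)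
      exact mul_nonpos_of_nonneg_of_nonpos (by linarith [not_lt.mp hδa])
        (hpair p hpΔ δ hδΔ hne)
    exact mul_nonpos_of_nonneg_of_nonpos hap.le h3
  have hu0 : u = 0 := by
    by_contra hne
    exact absurd hBuu (not_le.mpr (B_self_pos G hne))
  have hP0 : P = ∅ := by
    by_contra hPne
    obtain ⟨p₀, hp₀⟩ := Finset.nonempty_of_ne_empty hPne
    have h4 : B G x₀ u = 0 := by rw [hu0, B_zero_right]
    have h5 : B G x₀ u = ∑ p ∈ P, a p * B G x₀ p := B_sum_right x₀ P a
    have h6 : 0 < ∑ p ∈ P, a p * B G x₀ p := by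
      refine Finset.sum_pos (fun p hp => ?_) ⟨p₀, hp₀⟩
      have hap : 0 < a p := (Finset.mem_filter.mp hp).2
      have hpΔ : p ∈ Δ := (Finset.mem_filter.mp hp).1
      have := (hsub hpΔ).2
      refine mul_pos hap ?_
      rw [B_symm]; exact this
    rw [← h5, h4] at h6
    exact lt_irrefl _ h6
  intro δ hδ
  by_contra hgt
  push_neg at hgt
  have : δ ∈ P := Finset.mem_filter.mpr ⟨hδ, hgt⟩
  rw [hP0] at this
  exact absurd this (Finset.notMem_empty δ)

lemma coord_zero {x₀ : Fin n → ℝ} (hx₀ : x₀ ∈ Xr G) {Δ : Finset (Fin n → ℝ)}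
    (hsub : ↑Δ ⊆ Pos G x₀)
    (hpair : ∀ α ∈ Δ, ∀ β ∈ Δ, α ≠ β → B G α β ≤ 0)
    {a : (Fin n → ℝ) → ℝ} (ha : ∑ δ ∈ Δ, a δ • δ = 0) :
    ∀ δ ∈ Δ, a δ = 0 := by
  intro δ hδ
  have h1 := no_pos_part hx₀ hsub hpair ha δ hδ
  have ha2 : ∑ δ ∈ Δ, (-a δ) • δ = 0 := by
    have : ∑ δ ∈ Δ, (-a δ) • δ = -∑ δ ∈ Δ, a δ • δ := by
      rw [← Finset.sum_neg_distrib]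
      exact Finset.sum_congr rfl fun δ _ => neg_smul _ _
    rw [this, ha, neg_zero]
  have h2 := no_pos_part hx₀ hsub hpair ha2 δ hδ
  simp at h2
  linarith

/-- A simple reflection permutes the other positive roots. -/
lemma simple_perm {x₀ : Fin n → ℝ} (hx₀ : x₀ ∈ Xr G) {Δ : Finset (Fin n → ℝ)}
    (hsub : ↑Δ ⊆ Pos G x₀) (hcone : ∀ β ∈ Pos G x₀, inCone Δ β)
    (hpair : ∀ α ∈ Δ, ∀ β ∈ Δ, α ≠ β → B G α β ≤ 0)
    {δ : Fin n → ℝ} (hδ : δ ∈ Δ) {β : Fin n → ℝ} (hβ : β ∈ Pos G x₀) (hne : β ≠ δ) :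
    mv (sGL G δ) β ∈ Pos G x₀ := by
  classical
  have hδP : δ ∈ Pos G x₀ := hsub hδ
  have hδr : IsRoot G δ := hδP.1
  have hβr : IsRoot G β := hβ.1
  set γ := mv (sGL G δ) β with hγ
  have hγr : IsRoot G γ := isRoot_mv (sGL_mem hδr) hβr
  have hγval : γ = β - (2 * B G δ β) • δ := by rw [hγ, sGL_apply hδr]
  have hγx₀ : B G γ x₀ ≠ 0 := hx₀ γ hγr
  rcases lt_or_gt_of_ne hγx₀ with hneg | hpos
  · exfalso
    have hmγ : -γ ∈ Pos G x₀ := ⟨isRoot_neg hγr, by rw [B_neg_left]; linarith⟩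
    obtain ⟨mm, hmm, hmmsum⟩ := hcone _ hmγ
    obtain ⟨nn, hnn, hnnsum⟩ := hcone _ hβ
    set c : ℝ := 2 * B G δ β with hc
    have key : ∑ δ' ∈ Δ, ((nn δ' + mm δ') - if δ' = δ then c else 0) • δ' = 0 := by
      rw [sum_sub_smul, sum_add_smul, sum_ite_smul _ hδ, ← hnnsum, ← hmmsum]
      linear_combination (norm := module) -hγval
    have hcz := coord_zero hx₀ hsub hpair key
    have hnn0 : ∀ δ' ∈ Δ, δ' ≠ δ → nn δ' = 0 := by
      intro δ' hδ' hne'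
      have := hcz δ' hδ'
      simp only [hne', if_false, sub_zero] at this
      have h1 := hnn δ'
      have h2 := hmm δ'
      linarith
    have hβval : β = nn δ • δ := by
      rw [hnnsum, ← Finset.sum_erase_add Δ _ hδ]
      have : ∑ δ' ∈ Δ.erase δ, nn δ' • δ' = 0 := by
        refine Finset.sum_eq_zero fun δ' hδ' => ?_
        rw [hnn0 δ' (Finset.mem_of_mem_erase hδ') (Finset.ne_of_mem_erase hδ'), zero_smul]
      rw [this, zero_add]
    have h1 : nn δ * nn δ = 1 := by
      have := hβr.1
      rw [hβval, B_smul_left, B_smul_right, hδr.1, mul_one] at this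
      exact this
    have h2 : nn δ = 1 := by
      rcases mul_self_eq_one_iff.mp h1 with h | h
      · exact h
      · exfalso; have := hnn δ; rw [h] at this; linarith
    apply hne
    rw [hβval, h2, one_smul]
  · exact ⟨hγr, hpos⟩

/-! ### Words in simple reflections -/

/-- Product of the simple reflections along a list of roots. -/
def word (G' : Subgroup (GLn n)) [Fintype ↥G'] (l : List (Fin n → ℝ)) : GLn n :=
  (l.map (sGL G')).prod

lemma word_nil : word G [] = 1 := rfl

lemma word_cons (a : Fin n → ℝ) (t : List (Fin n → ℝ)) :
    word G (a :: t) = sGL G a * word G t := by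
  simp [word]

lemma word_append (l₁ l₂ : List (Fin n → ℝ)) :
    word G (l₁ ++ l₂) = word G l₁ * word G l₂ := by
  simp [word]

lemma word_mem {l : List (Fin n → ℝ)} (hl : ∀ a ∈ l, IsRoot G a) : word G l ∈ G := by
  induction l with
  | nil => exact one_mem G
  | cons a t ih =>
    rw [word_cons]
    exact mul_mem (sGL_mem (hl a (List.mem_cons_self)))
      (ih fun b hb => hl b (List.mem_cons_of_mem a hb))

/-- The exchange lemma. -/
lemma lemD {x₀ : Fin n → ℝ} (hx₀ : x₀ ∈ Xr G) {Δ : Finset (Fin n → ℝ)}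
    (hsub : ↑Δ ⊆ Pos G x₀) (hcone : ∀ β ∈ Pos G x₀, inCone Δ β)
    (hpair : ∀ α ∈ Δ, ∀ β ∈ Δ, α ≠ β → B G α β ≤ 0) :
    ∀ l : List (Fin n → ℝ), (∀ a ∈ l, a ∈ Δ) → ∀ δ ∈ Δ,
      B G (mv (word G l) δ) x₀ < 0 →
      ∃ l', (∀ a ∈ l', a ∈ Δ) ∧ l'.length + 1 = l.length ∧
        word G l' = word G l * sGL G δ := by
  intro l
  induction l with
  | nil =>
    intro _ δ hδ hB
    exfalso
    rw [word_nil, mv_one] at hB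
    exact absurd hB (not_lt.mpr (hsub hδ).2.le)
  | cons a t ih =>
    intro hmem δ hδ hB
    have haΔ : a ∈ Δ := hmem a (List.mem_cons_self)
    have htΔ : ∀ b ∈ t, b ∈ Δ := fun b hb => hmem b (List.mem_cons_of_mem a hb)
    have hδr : IsRoot G δ := (hsub hδ).1
    have htG : word G t ∈ G := word_mem fun b hb => (hsub (htΔ b hb)).1
    set γ := mv (word G t) δ with hγ
    have hγr : IsRoot G γ := isRoot_mv htG hδr
    have hγx₀ : B G γ x₀ ≠ 0 := hx₀ γ hγr
    rw [word_cons, mv_mul, ← hγ] at hB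
    rcases lt_or_gt_of_ne hγx₀ with hneg | hpos
    · obtain ⟨t', ht'mem, ht'len, ht'word⟩ := ih htΔ δ hδ hneg
      refine ⟨a :: t', fun b hb => ?_, by simp [ht'len.symm], ?_⟩
      · rcases List.mem_cons.mp hb with h | h
        · exact h ▸ haΔ
        · exact ht'mem b h
      · rw [word_cons, ht'word, word_cons, mul_assoc]
    · -- `γ` is positive but `s_a γ` is negative, so `γ = a`
      have hγP : γ ∈ Pos G x₀ := ⟨hγr, hpos⟩
      have hγa : γ = a := by
        by_contra hne
        have := simple_perm hx₀ hsub hcone hpair haΔ hγP hne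
        exact absurd this.2 (not_lt.mpr hB.le)
      -- conjugation: `sGL a = word t * sGL δ * (word t)⁻¹`
      have hconj : sGL G a = word G t * sGL G δ * (word G t)⁻¹ := by
        rw [← hγa, hγ]
        exact sGL_conj htG hδr
      refine ⟨t, htΔ, rfl, ?_⟩
      rw [word_cons, hconj]
      rw [mul_assoc (word G t * sGL G δ), inv_mul_cancel, mul_one, mul_assoc,
        sGL_sq hδr, mul_one]

/-! ### Generation by simple reflections -/

lemma gen_pos {x₀ : Fin n → ℝ} (hx₀ : x₀ ∈ Xr G) {Δ : Finset (Fin n → ℝ)}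
    (hsub : ↑Δ ⊆ Pos G x₀) (hcone : ∀ β ∈ Pos G x₀, inCone Δ β)
    (hpair : ∀ α ∈ Δ, ∀ β ∈ Δ, α ≠ β → B G α β ≤ 0)
    {β : Fin n → ℝ} (hβ : β ∈ Pos G x₀) :
    sGL G β ∈ Subgroup.closure (sGL G '' (Δ : Set (Fin n → ℝ))) := by
  classical
  set W' := Subgroup.closure (sGL G '' (Δ : Set (Fin n → ℝ))) with hW
  have hW'G : W' ≤ G := by
    rw [hW]
    refine (Subgroup.closure_le G).mpr ?_
    rintro _ ⟨δ, hδ, rfl⟩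
    exact sGL_mem (hsub hδ).1
  set T := {γ | γ ∈ Pos G x₀ ∧ ∃ w, w ∈ W' ∧ γ = mv w β} with hT
  have hTfin : T.Finite := (finite_roots (G := G)).subset fun γ hγ => hγ.1.1
  have hTne : β ∈ T := ⟨hβ, 1, one_mem _, by rw [mv_one]⟩
  obtain ⟨γ₀, hγ₀T, hmin⟩ := Finset.exists_min_image hTfin.toFinset
    (fun γ => B G γ x₀) ⟨β, hTfin.mem_toFinset.mpr hTne⟩
  obtain ⟨hγ₀P, w, hwW, hγ₀w⟩ := hTfin.mem_toFinset.mp hγ₀T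
  have hwG : w ∈ G := hW'G hwW
  have hγ₀Δ : γ₀ ∈ Δ := by
    by_contra hnotΔ
    obtain ⟨cc, hcc, hccsum⟩ := hcone _ hγ₀P
    have h1 : 0 < B G γ₀ γ₀ := B_self_pos G (root_ne_zero hγ₀P.1)
    have h2 := B_sum_right (G := G) γ₀ Δ cc
    rw [← hccsum] at h2
    have h3 : ∃ δ ∈ Δ, 0 < cc δ * B G γ₀ δ := by
      by_contra hno
      push_neg at hno
      have := Finset.sum_nonpos hno
      rw [← h2] at this
      linarith
    obtain ⟨δ, hδΔ, hδpos⟩ := h3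
    have hccδ : 0 < B G γ₀ δ := by
      rcases mul_pos_iff.mp hδpos with ⟨_, h⟩ | ⟨h1', _⟩
      · exact h
      · exact absurd h1' (not_lt.mpr (hcc δ))
    have hγδ : γ₀ ≠ δ := fun h => hnotΔ (h ▸ hδΔ)
    have hγ'P := simple_perm hx₀ hsub hcone hpair hδΔ hγ₀P hγδ
    have hγ'T : mv (sGL G δ) γ₀ ∈ T := by
      refine ⟨hγ'P, sGL G δ * w, mul_mem (Subgroup.subset_closure ⟨δ, hδΔ, rfl⟩) hwW, ?_⟩
      rw [mv_mul, ← hγ₀w]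
    have hlt : B G (mv (sGL G δ) γ₀) x₀ < B G γ₀ x₀ := by
      rw [sGL_apply (hsub hδΔ).1, B_sub_left, B_smul_left]
      have hδx : 0 < B G δ x₀ := (hsub hδΔ).2
      have hBsym : B G δ γ₀ = B G γ₀ δ := B_symm G δ γ₀
      nlinarith
    exact absurd (hmin _ (hTfin.mem_toFinset.mpr hγ'T)) (not_le.mpr hlt)
  have hs : sGL G β = w⁻¹ * sGL G γ₀ * w := by
    have hβw : β = mv w⁻¹ γ₀ := by rw [hγ₀w, mv_inv_mv]
    conv_lhs => rw [hβw]
    rw [sGL_conj (inv_mem hwG) (hsub hγ₀Δ).1, inv_inv]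
  rw [hs]
  exact mul_mem (mul_mem (inv_mem hwW) (Subgroup.subset_closure ⟨γ₀, hγ₀Δ, rfl⟩)) hwW

lemma G_le_closure (hgen : G = Subgroup.closure {σ | σ ∈ G ∧ IsReflection σ})
    {x₀ : Fin n → ℝ} (hx₀ : x₀ ∈ Xr G) {Δ : Finset (Fin n → ℝ)}
    (hsub : ↑Δ ⊆ Pos G x₀) (hcone : ∀ β ∈ Pos G x₀, inCone Δ β)
    (hpair : ∀ α ∈ Δ, ∀ β ∈ Δ, α ≠ β → B G α β ≤ 0) :
    ∀ g ∈ G, g ∈ Subgroup.closure (sGL G '' (Δ : Set (Fin n → ℝ))) := by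
  intro g hg
  rw [hgen] at hg
  refine (Subgroup.closure_le _).mpr ?_ hg
  rintro σ ⟨hσG, hσrefl⟩
  obtain ⟨α, hα, rfl⟩ := reflection_has_root hσG hσrefl
  have hαx : B G α x₀ ≠ 0 := hx₀ α hα
  rcases lt_or_gt_of_ne hαx with hneg | hpos
  · have h1 : -α ∈ Pos G x₀ := ⟨isRoot_neg hα, by rw [B_neg_left]; linarith⟩
    have := gen_pos hx₀ hsub hcone hpair h1
    rwa [sGL_neg hα] at this
  · exact gen_pos hx₀ hsub hcone hpair ⟨hα, hpos⟩

lemma exists_word_of_mem_closure {x₀ : Fin n → ℝ} {Δ : Finset (Fin n → ℝ)}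
    (hsub : ↑Δ ⊆ Pos G x₀) {g : GLn n}
    (hg : g ∈ Subgroup.closure (sGL G '' (Δ : Set (Fin n → ℝ)))) :
    ∃ l, (∀ a ∈ l, a ∈ Δ) ∧ word G l = g := by
  classical
  set S := sGL G '' (Δ : Set (Fin n → ℝ)) with hS
  have h1 : g ∈ Submonoid.closure (S ∪ S⁻¹) := by
    rw [← Subgroup.closure_toSubmonoid]
    exact hg
  obtain ⟨L, hLmem, hLprod⟩ := Submonoid.exists_list_of_mem_closure h1
  suffices h : ∀ L : List (GLn n), (∀ y ∈ L, y ∈ S ∪ S⁻¹) →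
      ∃ l, (∀ a ∈ l, a ∈ Δ) ∧ word G l = L.prod by
    obtain ⟨l, hl1, hl2⟩ := h L hLmem
    exact ⟨l, hl1, by rw [hl2, hLprod]⟩
  intro L
  induction L with
  | nil => exact fun _ => ⟨[], by simp, rfl⟩
  | cons y t ih =>
    intro hmem
    obtain ⟨lt, hlt1, hlt2⟩ := ih fun z hz => hmem z (List.mem_cons_of_mem y hz)
    have hy : ∃ δ ∈ Δ, y = sGL G δ := by
      rcases hmem y (List.mem_cons_self) with h | h
      · obtain ⟨δ, hδ, hδy⟩ := h
        exact ⟨δ, hδ, hδy.symm⟩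
      · rw [Set.mem_inv] at h
        obtain ⟨δ, hδ, hδy⟩ := h
        refine ⟨δ, hδ, ?_⟩
        have : (sGL G δ)⁻¹ = y := by rw [hδy, inv_inv]
        rw [← this, sGL_inv (hsub hδ).1]
    obtain ⟨δ, hδΔ, rfl⟩ := hy
    refine ⟨δ :: lt, fun a ha => ?_, ?_⟩
    · rcases List.mem_cons.mp ha with h | h
      · exact h ▸ hδΔ
      · exact hlt1 a h
    · rw [word_cons, hlt2, List.prod_cons]

/-- Freeness: an element fixing the fundamental chamber is trivial. -/
lemma freeness (hgen : G = Subgroup.closure {σ | σ ∈ G ∧ IsReflection σ})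
    {x₀ : Fin n → ℝ} (hx₀ : x₀ ∈ Xr G) {Δ : Finset (Fin n → ℝ)}
    (hsub : ↑Δ ⊆ Pos G x₀) (hcone : ∀ β ∈ Pos G x₀, inCone Δ β)
    (hpair : ∀ α ∈ Δ, ∀ β ∈ Δ, α ≠ β → B G α β ≤ 0)
    {v : GLn n} (hvG : v ∈ G)
    (hsign : ∀ β ∈ Pos G x₀, 0 < B G (mv v β) x₀) : v = 1 := by
  classical
  obtain ⟨l₀, hl₀mem, hl₀w⟩ := exists_word_of_mem_closure hsub
    (G_le_closure hgen hx₀ hsub hcone hpair v hvG)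
  set Q : ℕ → Prop := fun k => ∃ l : List (Fin n → ℝ),
    (∀ a ∈ l, a ∈ Δ) ∧ word G l = v ∧ l.length = k with hQdef
  have hQ : ∃ k, Q k := ⟨l₀.length, l₀, hl₀mem, hl₀w, rfl⟩
  obtain ⟨l, hlmem, hlw, hlen⟩ := Nat.find_spec hQ
  rcases eq_or_ne l [] with hnil | hne
  · rw [hnil] at hlw
    rw [← hlw, word_nil]
  · set δ := l.getLast hne with hδdef
    have hδΔ : δ ∈ Δ := hlmem δ (List.getLast_mem hne)
    have hδr : IsRoot G δ := (hsub hδΔ).1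
    have hsplit : word G l.dropLast * sGL G δ = v := by
      rw [← hlw]
      conv_rhs => rw [← List.dropLast_append_getLast hne]
      rw [word_append, ← hδdef, word_cons, word_nil, mul_one]
    have hw1 : word G l.dropLast = v * sGL G δ := by
      rw [← hsplit, mul_assoc, sGL_sq hδr, mul_one]
    have hBneg : B G (mv (word G l.dropLast) δ) x₀ < 0 := by
      rw [hw1, mv_mul, sGL_root hδr, mv_neg, B_neg_left]
      have := hsign δ (hsub hδΔ)
      linarith
    obtain ⟨l₂, hl₂mem, hl₂len, hl₂w⟩ := lemD hx₀ hsub hcone hpair l.dropLast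
      (fun a ha => hlmem a (List.dropLast_subset l ha)) δ hδΔ hBneg
    have hl₂v : word G l₂ = v := by
      rw [hl₂w, hw1, mul_assoc, sGL_sq hδr, mul_one]
    have hQl₂ : Q l₂.length := ⟨l₂, hl₂mem, hl₂v, rfl⟩
    have h1 := Nat.find_min' hQ hQl₂
    have h2 : l.dropLast.length = l.length - 1 := List.length_dropLast
    have h3 : l.length ≠ 0 := fun h => hne (List.length_eq_zero_iff.mp h)
    omega

/-! ### The main bijection -/

theorem main_bij (hgen : G = Subgroup.closure {σ | σ ∈ G ∧ IsReflection σ}) :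
    Nat.card (ConnectedComponents ↥(Xr G)) = Nat.card ↥G := by
  classical
  obtain ⟨x₀, hx₀⟩ := exists_x0 (G := G)
  obtain ⟨Δ, hsub, hcone, hmin⟩ := exists_simple_system (G := G) x₀
  have hpair : ∀ α ∈ Δ, ∀ β ∈ Δ, α ≠ β → B G α β ≤ 0 :=
    fun α hα β hβ hne => pairwise_nonpos hx₀ hsub hcone hmin hα hβ hne
  set F : ↥G → ConnectedComponents ↥(Xr G) := fun g =>
    ConnectedComponents.mk ⟨mv (g : GLn n) x₀, X_stable g.2 hx₀⟩ with hF
  have hinj : Function.Injective F := by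
    intro g h hFeq
    have hsigns := sign_of_mk_eq _ _ hFeq
    set v : GLn n := (g : GLn n)⁻¹ * (h : GLn n) with hv
    have hvG : v ∈ G := mul_mem (inv_mem g.2) h.2
    have hsign : ∀ β ∈ Pos G x₀, 0 < B G (mv v β) x₀ := by
      intro β hβ
      have hβr : IsRoot G β := hβ.1
      set α := mv (h : GLn n) β with hα
      have hαr : IsRoot G α := isRoot_mv h.2 hβr
      have h1 : B G (mv v β) x₀ = B G α (mv (g : GLn n) x₀) := by
        rw [hv, mv_mul, ← hα, B_inv_left G g.2]
      have h2 : B G α (mv (h : GLn n) x₀) = B G β x₀ := by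
        rw [hα, B_invariant G h.2]
      have h3 := hsigns α hαr
      rw [h1]
      rcases mul_pos_iff.mp h3 with ⟨ha, _⟩ | ⟨_, hb⟩
      · exact ha
      · rw [h2] at hb
        exact absurd hβ.2 (not_lt.mpr hb.le)
    have hv1 : v = 1 := freeness hgen hx₀ hsub hcone hpair hvG hsign
    have : (g : GLn n) = (h : GLn n) := by
      have := congrArg (fun z => (g : GLn n) * z) hv1
      simpa [hv, ← mul_assoc] using this.symm
    exact Subtype.ext this
  have hsurj : Function.Surjective F := by
    intro c
    obtain ⟨p, rfl⟩ := ConnectedComponents.surjective_coe c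
    obtain ⟨g, hgG, hsig⟩ := exists_g_sign hx₀ p.2
    refine ⟨⟨g, hgG⟩, ?_⟩
    exact mk_eq_of_sign ⟨mv g x₀, X_stable hgG hx₀⟩ p hsig
  exact (Nat.card_eq_of_bijective F ⟨hinj, hsurj⟩).symm

end

end CC

/-- For a finite Coxeter group `G` acting on `ℝ^n` (a finite subgroup of
`GL_n(ℝ)` generated by its reflections), the number of chambers of the reflection
arrangement — connected components of the complement of the union of the reflection
hyperplanes, i.e. of the fixed hyperplanes of the reflections of `G` — equals `|G|`. -/
theorem card_chambers_eq_card_coxeter_group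
    (n : ℕ) (G : Subgroup (Matrix.GeneralLinearGroup (Fin n) ℝ))
    (hfin : Finite G)
    (hgen : G = Subgroup.closure {σ | σ ∈ G ∧ IsReflection σ}) :
    Nat.card (ConnectedComponents
      ↥{x : Fin n → ℝ | ∀ σ ∈ G, IsReflection σ →
          (σ : Matrix (Fin n) (Fin n) ℝ).mulVec x ≠ x})
      = Nat.card G := by
  classical
  have : Fintype ↥G := Fintype.ofFinite ↥G
  rw [CC.Xset_eq]
  exact CC.main_bij hgen
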